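/- Let p be an odd prime, n a quadratic residue modulo p, and a an element of F_p such that a^2 - n is a quadratic nonresidue modulo p. Then in the field F_p(√w) where w = a^2 - n, the element x = (a + √w)^((p+1)/2) satisfies x^2 = n (as elements of F_p embedded in F_p(√w)). -/
import Mathlib


/-- Cipolla's algorithm, key identity: if `a^2 - n` is a nonsquare (Euler criterion
value `-1`) and `s` is a square root of `a^2 - n` in an extension field of `F_p`,
then `x = (a + s)^((p+1)/2)` satisfies `x^2 = n`. -/
theorem stmt_0 (p : ℕ) (hp : p.Prime) (hodd : Odd p)
    (K : Type*) [Field K] [Algebra (ZMod p) K]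
    (n a : ZMod p) (hn : IsSquare n)
    (hns : (a ^ 2 - n) ^ ((p - 1) / 2) = -1)
    (s : K) (hs : s ^ 2 = algebraMap (ZMod p) K (a ^ 2 - n)) :
    ((algebraMap (ZMod p) K a + s) ^ ((p + 1) / 2)) ^ 2
      = algebraMap (ZMod p) K n := by
  haveI := Fact.mk hp
  haveI : CharP K p :=
    charP_of_injective_algebraMap (algebraMap (ZMod p) K).injective p
  set φ := algebraMap (ZMod p) K with hφ
  have hps : (p + 1) / 2 * 2 = p + 1 := by
    obtain ⟨k, hk⟩ := hodd; omega
  rw [← pow_mul, hps]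
  have hfrob : (φ a + s) ^ p = φ a - s := by
    rw [add_pow_char]
    have ha : (φ a) ^ p = φ a := by rw [← map_pow, ZMod.pow_card]
    have hsp : s ^ p = -s := by
      have hpe : p = 2 * ((p - 1) / 2) + 1 := by obtain ⟨k, hk⟩ := hodd; omega
      rw [hpe, pow_succ, pow_mul, hs, ← map_pow, hns, map_neg, map_one, neg_one_mul]
    rw [ha, hsp]; ring
  rw [pow_succ, hfrob]
  have h2 : (φ a - s) * (φ a + s) = φ a ^ 2 - s ^ 2 := by ring
  rw [h2, hs, ← map_pow, ← map_sub, sub_sub_cancel]
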